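/- Let n ≥ 1 be odd and a > 0. In Euclidean space ℝ^(2n+2) with coordinates (u_1, …, u_{2n+2}), define the linear vector field ξ by pairing the coordinates: for 1 ≤ k ≤ (n+1)/2, the (2k−1)-th component of ξ(u) is −u_{2k} and the (2k)-th component is u_{2k−1}; and for 0 ≤ j ≤ (n−1)/2, the (n+2+2j)-th component of ξ(u) is −√a·u_{n+3+2j} and the (n+3+2j)-th component is √a·u_{n+2+2j}. Let F(u) = Σ_{i=1}^{n+1} u_i² + a·Σ_{i=n+2}^{2n+2} u_i² and let M = {u ∈ ℝ^(2n+2) : F(u) = 1} be the ellipsoid. Then: (i) the linear map u ↦ ξ(u) is skew-adjoint, ⟪ξ(u), v⟫ = −⟪u, ξ(v)⟫ for all u, v (so ξ is a Killing vector field on Euclidean space); (ii) ξ is tangent to the level sets of F: ⟪ξ(u), w(u)⟫ = 0 for all u, where w(u) is the gradient of F at u, with components 2u_i for 1 ≤ i ≤ n+1 and 2a·u_i for n+2 ≤ i ≤ 2n+2; (iii) ‖ξ(u)‖² = F(u) for all u, so the restriction of ξ to M has unit length: ‖ξ(u)‖ = 1 for every u ∈ M. -/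

import Mathlib

open RealInnerProductSpace

private def eext {N : ℕ} (x : EuclideanSpace ℝ (Fin N)) (i : ℕ) : ℝ :=
  if h : i < N then x ⟨i, h⟩ else 0

private lemma eext_eq {N : ℕ} (x : EuclideanSpace ℝ (Fin N)) {i : ℕ} (h : i < N) :
    eext x i = x ⟨i, h⟩ := dif_pos h

private lemma sum_pair (N : ℕ) (g : ℕ → ℝ) :
    ∑ i ∈ Finset.range (2 * N), g i = ∑ t ∈ Finset.range N, (g (2 * t) + g (2 * t + 1)) := by
  induction N with
  | zero => simp
  | succ N ih =>
    have h2 : 2 * (N + 1) = 2 * N + 1 + 1 := by ring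
    rw [h2, Finset.sum_range_succ, Finset.sum_range_succ, ih, Finset.sum_range_succ]
    ring

private lemma fin_sum_eext {N : ℕ} (g : Fin N → ℝ) (g' : ℕ → ℝ)
    (hg : ∀ (i : ℕ) (h : i < N), g ⟨i, h⟩ = g' i) :
    ∑ i : Fin N, g i = ∑ i ∈ Finset.range N, g' i := by
  rw [← Fin.sum_univ_eq_sum_range]
  exact Finset.sum_congr rfl fun i _ => by rw [← hg i i.isLt]

/-- The ellipsoid example: on `ℝ^(2n+2)` (n odd), the linear vector field `ξ`
pairing the coordinates (with weight `√a` on the second block) is skew-adjoint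
(hence Killing), is tangent to the level sets of
`F(u) = Σ_{i=1}^{n+1} u_i² + a Σ_{i=n+2}^{2n+2} u_i²`, and satisfies
`‖ξ(u)‖² = F(u)`, so it has unit length on the ellipsoid `M = {F = 1}`.
(Indices below are 0-based: the first block is `0 ≤ i ≤ n`, the second block is
`n+1 ≤ i ≤ 2n+1`.) -/
theorem ellipsoid_unit_killing
    {n : ℕ} (hn : 1 ≤ n) (hodd : n % 2 = 1) (a : ℝ) (ha : 0 < a)
    (ξ : EuclideanSpace ℝ (Fin (2 * n + 2)) →ₗ[ℝ] EuclideanSpace ℝ (Fin (2 * n + 2)))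
    -- first block: for 1 ≤ k ≤ (n+1)/2, components 2k−1 and 2k (1-based) are
    -- −u_{2k} and u_{2k−1}; in 0-based indexing, for k < (n+1)/2:
    (hξ1 : ∀ (u : EuclideanSpace ℝ (Fin (2 * n + 2))) (k : ℕ) (hk : k < (n + 1) / 2),
      ξ u ⟨2 * k, by omega⟩ = -(u ⟨2 * k + 1, by omega⟩) ∧
      ξ u ⟨2 * k + 1, by omega⟩ = u ⟨2 * k, by omega⟩)
    -- second block: for 0 ≤ j ≤ (n−1)/2, components n+2+2j and n+3+2j (1-based)
    -- are −√a·u_{n+3+2j} and √a·u_{n+2+2j}; in 0-based indexing: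
    (hξ2 : ∀ (u : EuclideanSpace ℝ (Fin (2 * n + 2))) (j : ℕ) (hj : j ≤ (n - 1) / 2),
      ξ u ⟨n + 1 + 2 * j, by omega⟩ = -(Real.sqrt a * u ⟨n + 2 + 2 * j, by omega⟩) ∧
      ξ u ⟨n + 2 + 2 * j, by omega⟩ = Real.sqrt a * u ⟨n + 1 + 2 * j, by omega⟩)
    (F : EuclideanSpace ℝ (Fin (2 * n + 2)) → ℝ)
    (hF : ∀ u, F u = ∑ i : Fin (2 * n + 2),
      (if (i : ℕ) < n + 1 then (1 : ℝ) else a) * (u i) ^ 2)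
    (w : EuclideanSpace ℝ (Fin (2 * n + 2)) → EuclideanSpace ℝ (Fin (2 * n + 2)))
    (hw : ∀ u i, w u i = (if (i : ℕ) < n + 1 then (2 : ℝ) else 2 * a) * u i) :
    -- (i) ξ is a skew-adjoint linear map, hence a Killing field on Euclidean space
    (∀ u v : EuclideanSpace ℝ (Fin (2 * n + 2)), ⟪ξ u, v⟫ = -⟪u, ξ v⟫) ∧
    -- (ii) ξ is orthogonal to the gradient of F, i.e. tangent to the level sets of F
    (∀ u : EuclideanSpace ℝ (Fin (2 * n + 2)), ⟪ξ u, w u⟫ = 0) ∧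
    -- (iii) ‖ξ(u)‖² = F(u); in particular ξ has unit length on M = {F = 1}
    (∀ u : EuclideanSpace ℝ (Fin (2 * n + 2)), ‖ξ u‖ ^ 2 = F u) ∧
    (∀ u : EuclideanSpace ℝ (Fin (2 * n + 2)), F u = 1 → ‖ξ u‖ = 1) := by
  obtain ⟨m, hm⟩ : ∃ m, n + 1 = 2 * m := ⟨(n + 1) / 2, by omega⟩
  have hm1 : 1 ≤ m := by omega
  have hN4 : 2 * n + 2 = 2 * (2 * m) := by omega
  -- key per-pair description of ξ
  have key : ∀ (u : EuclideanSpace ℝ (Fin (2 * n + 2))) (t : ℕ), t < 2 * m →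
      eext (ξ u) (2 * t) = -((if t < m then (1:ℝ) else Real.sqrt a) * eext u (2 * t + 1)) ∧
      eext (ξ u) (2 * t + 1) = (if t < m then (1:ℝ) else Real.sqrt a) * eext u (2 * t) := by
    intro u t ht
    by_cases htm : t < m
    · have h := hξ1 u t (by omega)
      have p1 : 2 * t < 2 * n + 2 := by omega
      have p2 : 2 * t + 1 < 2 * n + 2 := by omega
      rw [eext_eq (ξ u) p1, eext_eq (ξ u) p2, eext_eq u p1, eext_eq u p2]
      simp only [if_pos htm, one_mul]
      exact h
    · have hj : t - m ≤ (n - 1) / 2 := by omega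
      have h := hξ2 u (t - m) hj
      have e1 : (⟨n + 1 + 2 * (t - m), by omega⟩ : Fin (2 * n + 2)) = ⟨2 * t, by omega⟩ :=
        Fin.mk_eq_mk.mpr (by omega)
      have e2 : (⟨n + 2 + 2 * (t - m), by omega⟩ : Fin (2 * n + 2)) = ⟨2 * t + 1, by omega⟩ :=
        Fin.mk_eq_mk.mpr (by omega)
      rw [e1, e2] at h
      have p1 : 2 * t < 2 * n + 2 := by omega
      have p2 : 2 * t + 1 < 2 * n + 2 := by omega
      rw [eext_eq (ξ u) p1, eext_eq (ξ u) p2, eext_eq u p1, eext_eq u p2]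
      simp only [if_neg htm]
      exact h
  -- inner product in pair form
  have hinner : ∀ x y : EuclideanSpace ℝ (Fin (2 * n + 2)),
      ⟪x, y⟫ = ∑ t ∈ Finset.range (2 * m),
        (eext x (2 * t) * eext y (2 * t) + eext x (2 * t + 1) * eext y (2 * t + 1)) := by
    intro x y
    rw [PiLp.inner_apply]
    have : ∑ i : Fin (2 * n + 2), ⟪x i, y i⟫ =
        ∑ i ∈ Finset.range (2 * n + 2), eext x i * eext y i := by
      apply fin_sum_eext
      intro i h
      rw [eext_eq x h, eext_eq y h]
      simp [RCLike.inner_apply]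
      ring
    have hrange : Finset.range (2 * n + 2) = Finset.range (2 * (2 * m)) := by rw [hN4]
    rw [this, hrange, sum_pair]
  -- F in pair form
  have hFpair : ∀ u : EuclideanSpace ℝ (Fin (2 * n + 2)),
      F u = ∑ t ∈ Finset.range (2 * m),
        ((if t < m then (1:ℝ) else a) * (eext u (2 * t) ^ 2 + eext u (2 * t + 1) ^ 2)) := by
    intro u
    rw [hF]
    have : ∑ i : Fin (2 * n + 2), (if (i : ℕ) < n + 1 then (1 : ℝ) else a) * (u i) ^ 2 =
        ∑ i ∈ Finset.range (2 * n + 2),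
          (if i < n + 1 then (1 : ℝ) else a) * (eext u i) ^ 2 := by
      apply fin_sum_eext
      intro i h
      rw [eext_eq u h]
    have hrange : Finset.range (2 * n + 2) = Finset.range (2 * (2 * m)) := by rw [hN4]
    rw [this, hrange, sum_pair]
    apply Finset.sum_congr rfl
    intro t ht
    simp only [Finset.mem_range] at ht
    by_cases htm : t < m
    · rw [if_pos (by omega : 2 * t < n + 1), if_pos (by omega : 2 * t + 1 < n + 1), if_pos htm]
      ring
    · rw [if_neg (by omega : ¬ 2 * t < n + 1), if_neg (by omega : ¬ 2 * t + 1 < n + 1),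
        if_neg htm]
      ring
  -- (i)
  have part1 : ∀ u v : EuclideanSpace ℝ (Fin (2 * n + 2)), ⟪ξ u, v⟫ = -⟪u, ξ v⟫ := by
    intro u v
    have : ⟪ξ u, v⟫ + ⟪u, ξ v⟫ = 0 := by
      rw [hinner, hinner, ← Finset.sum_add_distrib]
      apply Finset.sum_eq_zero
      intro t ht
      simp only [Finset.mem_range] at ht
      obtain ⟨k1, k2⟩ := key u t ht
      obtain ⟨k3, k4⟩ := key v t ht
      rw [k1, k2, k3, k4]
      ring
    linarith
  have part3 : ∀ u : EuclideanSpace ℝ (Fin (2 * n + 2)), ‖ξ u‖ ^ 2 = F u := by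
    intro u
    rw [← real_inner_self_eq_norm_sq, hinner, hFpair]
    apply Finset.sum_congr rfl
    intro t ht
    simp only [Finset.mem_range] at ht
    obtain ⟨k1, k2⟩ := key u t ht
    rw [k1, k2]
    by_cases htm : t < m
    · simp only [if_pos htm]; ring
    · simp only [if_neg htm]
      have : Real.sqrt a ^ 2 = a := Real.sq_sqrt ha.le
      nlinarith [this]
  refine ⟨part1, ?_, part3, ?_⟩
  · -- (ii)
    intro u
    rw [hinner]
    apply Finset.sum_eq_zero
    intro t ht
    simp only [Finset.mem_range] at ht
    obtain ⟨k1, k2⟩ := key u t ht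
    have p1 : 2 * t < 2 * n + 2 := by omega
    have p2 : 2 * t + 1 < 2 * n + 2 := by omega
    have w1 : eext (w u) (2 * t) = (if 2 * t < n + 1 then (2:ℝ) else 2 * a) * eext u (2 * t) := by
      rw [eext_eq (w u) p1, eext_eq u p1]
      exact hw u _
    have w2 : eext (w u) (2 * t + 1) =
        (if 2 * t + 1 < n + 1 then (2:ℝ) else 2 * a) * eext u (2 * t + 1) := by
      rw [eext_eq (w u) p2, eext_eq u p2]
      exact hw u _
    rw [k1, k2, w1, w2]
    by_cases htm : t < m
    · rw [if_pos (by omega : 2 * t < n + 1), if_pos (by omega : 2 * t + 1 < n + 1)]; ring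
    · rw [if_neg (by omega : ¬ 2 * t < n + 1), if_neg (by omega : ¬ 2 * t + 1 < n + 1)]; ring
  · -- (iv)
    intro u hu
    have h := part3 u
    rw [hu] at h
    nlinarith [norm_nonneg (ξ u)]
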